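/- Let d be a balanced vector with minimal conical decomposition d = Σ_{i=1}^r a_i δ_i (a_i > 0 rational, δ_i linearly independent extremal vectors of the balanced cone). Define the graph on {1,…,r} with an edge between i and j (i ≠ j) iff ⟨δ_i, δ_j⟩ ≠ 0. If this graph has no isolated vertex, then it is connected. -/
import Mathlib


open Finset

/-- The space of rational vectors indexed by the vertices of the generalized subspace
quiver: the first component is the value at the sink `v₀`, the second gives the values
at the sources `v_{ij}`. -/
abbrev QVec (m : ℕ) (r : Fin m → ℕ) : Type := ℚ × ((i : Fin m) → Fin (r i) → ℚ)

/-- The extremal vector `δ_u` : value `1` at `v₀`, value `1/w_{i u_i}` at `v_{i u_i}`,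
and `0` at all other vertices. -/
def delta {m : ℕ} {r : Fin m → ℕ} (w : ∀ i, Fin (r i) → ℕ) (u : ∀ i, Fin (r i)) :
    QVec m r :=
  (1, fun i j => if j = u i then ((w i (u i) : ℚ))⁻¹ else 0)

/-- A vector is balanced if `Σ_j w_{ij} d_{ij} = d₀` for every cluster `i`. -/
def IsBalancedVec {m : ℕ} {r : Fin m → ℕ} (w : ∀ i, Fin (r i) → ℕ) (x : QVec m r) : Prop :=
  ∀ i, ∑ j, (w i j : ℚ) * x.2 i j = x.1

/-- The Euler bilinear form of the generalized subspace quiver: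
`⟨d, d'⟩ = Σ_v d_v d'_v − Σ_{arrows} d_{source} d'₀`. -/
def euler {m : ℕ} {r : Fin m → ℕ} (w : ∀ i, Fin (r i) → ℕ) (x y : QVec m r) : ℚ :=
  x.1 * y.1 + ∑ i, ∑ j, x.2 i j * y.2 i j - ∑ i, ∑ j, (w i j : ℚ) * x.2 i j * y.1

lemma euler_delta {m : ℕ} {r : Fin m → ℕ} (w : ∀ i, Fin (r i) → ℕ)
    (hw : ∀ i j, 0 < w i j) (u v : ∀ i, Fin (r i)) :
    euler w (delta w u) (delta w v)
      = 1 - m + ∑ i, (if u i = v i then ((w i (u i) : ℚ))⁻¹ ^ 2 else 0) := by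
  have h1 : ∀ i : Fin m, ∑ j, ((delta w u).2 i j * (delta w v).2 i j)
      = if u i = v i then ((w i (u i) : ℚ))⁻¹ ^ 2 else 0 := by
    intro i
    simp only [delta, ite_mul, mul_ite, zero_mul, mul_zero]
    rw [Finset.sum_eq_single (u i)]
    · simp only [if_pos rfl]
      split_ifs with h
      · rw [← h, sq]
      · rfl
    · intro b _ hb
      simp [hb]
    · simp
  have h2 : ∀ i : Fin m, ∑ j, ((w i j : ℚ) * (delta w u).2 i j * (delta w v).1) = 1 := by
    intro i
    simp only [delta, mul_ite, mul_one, mul_zero, ite_mul, zero_mul]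
    rw [Finset.sum_eq_single (u i)]
    · rw [if_pos rfl, mul_inv_cancel₀]
      exact_mod_cast (hw i (u i)).ne'
    · intro b _ hb; simp [hb]
    · simp
  simp only [euler, Finset.sum_congr rfl (fun i _ => h1 i),
    Finset.sum_congr rfl (fun i _ => h2 i)]
  simp [delta, Finset.card_univ]
  ring

lemma euler_delta_symm {m : ℕ} {r : Fin m → ℕ} (w : ∀ i, Fin (r i) → ℕ)
    (hw : ∀ i j, 0 < w i j) (u v : ∀ i, Fin (r i)) :
    euler w (delta w u) (delta w v) = euler w (delta w v) (delta w u) := by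
  rw [euler_delta w hw, euler_delta w hw]
  congr 1
  refine Finset.sum_congr rfl fun i _ => ?_
  by_cases h : u i = v i
  · rw [if_pos h, if_pos h.symm, h]
  · rw [if_neg h, if_neg (Ne.symm h)]

lemma delta_injective {m : ℕ} {r : Fin m → ℕ} (w : ∀ i, Fin (r i) → ℕ)
    (hw : ∀ i j, 0 < w i j) : Function.Injective (delta (r := r) w) := by
  intro u v h
  by_contra hne
  obtain ⟨i, hi⟩ : ∃ i, u i ≠ v i := by
    by_contra hc; push_neg at hc; exact hne (funext hc)
  have h2 := congrFun (congrFun (congrArg Prod.snd h) i) (u i)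
  simp only [delta, if_pos rfl, if_neg hi] at h2
  exact (inv_ne_zero (by exact_mod_cast (hw i (u i)).ne')) h2

/-- Orthogonality structure: distinct `u, v` with `⟨δ_u, δ_v⟩ = 0` agree everywhere
except at one coordinate, and the weights at agreeing coordinates are `1`. -/
lemma orth_structure {m : ℕ} {r : Fin m → ℕ} (w : ∀ i, Fin (r i) → ℕ)
    (hw : ∀ i j, 0 < w i j) (u v : ∀ i, Fin (r i)) (hne : u ≠ v)
    (h : euler w (delta w u) (delta w v) = 0) :
    ∃ c, u c ≠ v c ∧ ∀ i, i ≠ c → u i = v i ∧ w i (u i) = 1 := by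
  obtain ⟨c, hc⟩ : ∃ c, u c ≠ v c := by
    by_contra hc; push_neg at hc; exact hne (funext hc)
  rw [euler_delta w hw] at h
  -- the sum equals m - 1
  have hsum : ∑ i, (if u i = v i then ((w i (u i) : ℚ))⁻¹ ^ 2 else 0) = (m : ℚ) - 1 := by
    linarith
  set f : Fin m → ℚ := fun i => if u i = v i then ((w i (u i) : ℚ))⁻¹ ^ 2 else 0 with hf
  have hle1 : ∀ i : Fin m, i ≠ c → f i ≤ 1 := by
    intro i _
    simp only [hf]
    split_ifs with h'
    · have : (1 : ℚ) ≤ (w i (u i) : ℚ) := by exact_mod_cast (hw i (u i))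
      have h0 : (0:ℚ) < (w i (u i) : ℚ) := by exact_mod_cast (hw i (u i))
      rw [sq]
      calc ((w i (u i):ℚ))⁻¹ * ((w i (u i):ℚ))⁻¹ ≤ 1 * 1 := by
            apply mul_le_mul
            · rw [inv_le_one_iff₀]; right; exact this
            · rw [inv_le_one_iff₀]; right; exact this
            · positivity
            · norm_num
        _ = 1 := by norm_num
    · norm_num
  have hfc : f c = 0 := by simp only [hf]; rw [if_neg hc]
  -- sum over univ.erase c
  have hsum' : ∑ i ∈ univ.erase c, f i = (m : ℚ) - 1 := by
    have h5 := Finset.sum_erase_add univ f (mem_univ c)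
    rw [hfc, add_zero] at h5
    rw [h5]; exact hsum
  have hcard : ((univ.erase c).card : ℚ) = (m : ℚ) - 1 := by
    rw [Finset.card_erase_of_mem (mem_univ c), Finset.card_univ, Fintype.card_fin]
    have : 1 ≤ m := Nat.one_le_iff_ne_zero.mpr (by rintro rfl; exact c.elim0)
    push_cast [Nat.cast_sub this]
    ring
  -- each term must be 1
  have hall : ∀ i ∈ univ.erase c, f i = 1 := by
    by_contra hcon
    push_neg at hcon
    obtain ⟨i, hi, hi1⟩ := hcon
    have hlt : ∑ x ∈ univ.erase c, f x < ∑ x ∈ univ.erase c, (1 : ℚ) :=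
      Finset.sum_lt_sum (fun x hx => hle1 x (Finset.ne_of_mem_erase hx))
        ⟨i, hi, lt_of_le_of_ne (hle1 i (Finset.ne_of_mem_erase hi)) hi1⟩
    rw [hsum', Finset.sum_const, nsmul_eq_mul, mul_one, hcard] at hlt
    exact lt_irrefl _ hlt
  refine ⟨c, hc, fun i hi => ?_⟩
  have := hall i (Finset.mem_erase.mpr ⟨hi, mem_univ i⟩)
  simp only [hf] at this
  by_cases h' : u i = v i
  · rw [if_pos h'] at this
    refine ⟨h', ?_⟩
    have hwi : (0:ℚ) < (w i (u i) : ℚ) := by exact_mod_cast hw i (u i)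
    rw [inv_pow, inv_eq_one] at this
    have h1 : (w i (u i) : ℚ) = 1 := by nlinarith
    exact_mod_cast h1
  · rw [if_neg h'] at this; norm_num at this

/-- Converse: differing at exactly one coordinate with all other weights `1` gives
orthogonality. -/
lemma euler_eq_zero_of {m : ℕ} {r : Fin m → ℕ} (w : ∀ i, Fin (r i) → ℕ)
    (hw : ∀ i j, 0 < w i j) (u v : ∀ i, Fin (r i)) (c : Fin m)
    (h1 : u c ≠ v c) (h2 : ∀ i, i ≠ c → u i = v i ∧ w i (u i) = 1) :
    euler w (delta w u) (delta w v) = 0 := by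
  rw [euler_delta w hw]
  have : ∑ i, (if u i = v i then ((w i (u i) : ℚ))⁻¹ ^ 2 else 0)
      = ∑ i ∈ univ.erase c, (1:ℚ) + (if u c = v c then ((w c (u c) : ℚ))⁻¹ ^ 2 else 0) := by
    rw [← Finset.sum_erase_add _ _ (mem_univ c)]
    congr 1
    refine Finset.sum_congr rfl fun i hi => ?_
    obtain ⟨h3, h4⟩ := h2 i (Finset.ne_of_mem_erase hi)
    rw [if_pos h3, h4]; norm_num
  rw [this, if_neg h1, add_zero, Finset.sum_const, nsmul_eq_mul, mul_one,
    Finset.card_erase_of_mem (mem_univ c), Finset.card_univ, Fintype.card_fin]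
  have hm : 1 ≤ m := Nat.one_le_iff_ne_zero.mpr (by rintro rfl; exact c.elim0)
  push_cast [Nat.cast_sub hm]
  ring

/-- If at each cluster the pair of slots of `a, b` matches that of `c, d`, then
`δ_a + δ_b = δ_c + δ_d`. -/
lemma delta_add_delta {m : ℕ} {r : Fin m → ℕ} (w : ∀ i, Fin (r i) → ℕ)
    (a b c d : ∀ i, Fin (r i))
    (h : ∀ i, (a i = c i ∧ b i = d i) ∨ (a i = d i ∧ b i = c i)) :
    delta w a + delta w b = delta w c + delta w d := by
  have hterm : ∀ (u v : ∀ i, Fin (r i)) (i : Fin m) (k : Fin (r i)),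
      (delta w u + delta w v).2 i k
        = (if k = u i then ((w i (u i) : ℚ))⁻¹ else 0)
          + (if k = v i then ((w i (v i) : ℚ))⁻¹ else 0) := by
    intro u v i k; rfl
  refine Prod.ext rfl ?_
  show (fun i k => _) = _
  funext i k
  rw [hterm, hterm]
  rcases h i with ⟨h1, h2⟩ | ⟨h1, h2⟩
  · rw [h1, h2]
  · rw [h1, h2, add_comm]

lemma li_contra {m : ℕ} {r : Fin m → ℕ} {s : ℕ} (f : Fin s → QVec m r)
    (hli : LinearIndependent ℚ f) (i i' j j' : Fin s)
    (hii' : i ≠ i') (hij : i ≠ j) (hij' : i ≠ j') (hi'j : i' ≠ j) (hi'j' : i' ≠ j')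
    (hjj' : j ≠ j') (h : f i + f i' = f j + f j') : False := by
  set g : Fin s → ℚ := fun x =>
    (if x = i then 1 else 0) + (if x = i' then 1 else 0)
      - (if x = j then 1 else 0) - (if x = j' then 1 else 0) with hg
  have hsum : ∑ x, g x • f x = 0 := by
    have : ∀ x, g x • f x =
        (if x = i then (1:ℚ) else 0) • f x + (if x = i' then (1:ℚ) else 0) • f x
          - (if x = j then (1:ℚ) else 0) • f x - (if x = j' then (1:ℚ) else 0) • f x := by
      intro x; simp only [hg, sub_smul, add_smul]
    rw [Finset.sum_congr rfl (fun x _ => this x)]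
    rw [Finset.sum_sub_distrib, Finset.sum_sub_distrib, Finset.sum_add_distrib]
    simp only [ite_smul, zero_smul, one_smul, Finset.sum_ite_eq', mem_univ, if_pos]
    rw [sub_sub, h]
    abel
  have := Fintype.linearIndependent_iff.mp hli g hsum i
  simp only [hg, if_pos rfl, if_neg hii', if_neg hij, if_neg hij'] at this
  norm_num at this

/-- Let `d = Σ a_i δ_i` be a minimal conical decomposition of a balanced vector, and put
an edge between `i ≠ j` iff `⟨δ_i, δ_j⟩ ≠ 0`. If this graph has no isolated vertex, then
it is connected. -/
theorem no_isolated_vertex_connected {m : ℕ} {r : Fin m → ℕ}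
    (w : ∀ i, Fin (r i) → ℕ) (hw : ∀ i j, 0 < w i j)
    (s : ℕ) (δ : Fin s → (∀ i, Fin (r i))) (a : Fin s → ℚ)
    (ha : ∀ i, 0 < a i)
    (hli : LinearIndependent ℚ (fun i => delta w (δ i)))
    (d : QVec m r) (hd : d = ∑ i, a i • delta w (δ i))
    (hdbal : IsBalancedVec w d)
    (hniso : ∀ i : Fin s, ∃ j, i ≠ j ∧ euler w (delta w (δ i)) (delta w (δ j)) ≠ 0) :
    ∀ p q : Fin s, Relation.ReflTransGen
      (fun i j => i ≠ j ∧ euler w (delta w (δ i)) (delta w (δ j)) ≠ 0) p q := by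

  intro p q
  by_contra hpq
  set R : Fin s → Fin s → Prop :=
    fun i j => i ≠ j ∧ euler w (delta w (δ i)) (delta w (δ j)) ≠ 0 with hR
  have hRsymm : ∀ i j, R i j → R j i := by
    rintro i j ⟨h1, h2⟩
    exact ⟨h1.symm, by rwa [euler_delta_symm w hw] at h2⟩
  have hDinj : ∀ x y : Fin s, δ x = δ y → x = y := by
    intro x y h
    exact hli.injective (show delta w (δ x) = delta w (δ y) from congrArg (delta w) h)
  obtain ⟨p', hp'⟩ := hniso p
  obtain ⟨q', hq'⟩ := hniso q
  have hx2 : Relation.ReflTransGen R p p' := Relation.ReflTransGen.single hp'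
  have hy2 : Relation.ReflTransGen R q' q := Relation.ReflTransGen.single (hRsymm _ _ hq')
  have key : ∀ x y, Relation.ReflTransGen R p x → Relation.ReflTransGen R y q →
      x ≠ y ∧ euler w (delta w (δ x)) (delta w (δ y)) = 0 := by
    intro x y hx hy
    have hxy : x ≠ y := by rintro rfl; exact hpq (hx.trans hy)
    refine ⟨hxy, ?_⟩
    by_contra h
    exact hpq (hx.trans (Relation.ReflTransGen.head ⟨hxy, h⟩ hy))
  obtain ⟨hne_pq, o_pq⟩ := key p q Relation.ReflTransGen.refl Relation.ReflTransGen.refl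
  obtain ⟨hne_pq', o_pq'⟩ := key p q' Relation.ReflTransGen.refl hy2
  obtain ⟨hne_p'q, o_p'q⟩ := key p' q hx2 Relation.ReflTransGen.refl
  obtain ⟨hne_p'q', o_p'q'⟩ := key p' q' hx2 hy2
  -- structure of the orthogonal pairs
  obtain ⟨c, hcne, hcrest⟩ := orth_structure w hw (δ p) (δ q)
    (fun h => hne_pq (hDinj _ _ h)) o_pq
  obtain ⟨c', hc'ne, hc'rest⟩ := orth_structure w hw (δ p') (δ q)
    (fun h => hne_p'q (hDinj _ _ h)) o_p'q
  obtain ⟨e, hene, herest⟩ := orth_structure w hw (δ q') (δ p)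
    (fun h => hne_pq' (hDinj _ _ h).symm)
    (by rw [euler_delta_symm w hw]; exact o_pq')
  obtain ⟨f, hfne, hfrest⟩ := orth_structure w hw (δ q') (δ p')
    (fun h => hne_p'q' (hDinj _ _ h).symm)
    (by rw [euler_delta_symm w hw]; exact o_p'q')
  -- Step A : c ≠ c'
  have hAc : c ≠ c' := by
    rintro rfl
    by_cases hcc : δ p c = δ p' c
    · refine hp'.1 (hDinj _ _ (funext fun i => ?_))
      by_cases hi : i = c
      · subst hi; exact hcc
      · exact ((hcrest i hi).1).trans ((hc'rest i hi).1).symm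
    · exact hp'.2 (euler_eq_zero_of w hw (δ p) (δ p') c hcc
        (fun i hi => ⟨((hcrest i hi).1).trans ((hc'rest i hi).1).symm, (hcrest i hi).2⟩))
  -- Step B : e ≠ c
  have hBe : e ≠ c := by
    rintro rfl
    by_cases hcc : δ q' e = δ q e
    · refine hq'.1 (hDinj _ _ (funext fun i => ?_)).symm
      by_cases hi : i = e
      · subst hi; exact hcc
      · exact ((herest i hi).1).trans (hcrest i hi).1
    · have h0 := euler_eq_zero_of w hw (δ q') (δ q) e hcc
        (fun i hi => ⟨((herest i hi).1).trans (hcrest i hi).1, (herest i hi).2⟩)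
      rw [← euler_delta_symm w hw] at h0
      exact hq'.2 h0
  -- Step C : e = c'
  have hCe : e = c' := by
    by_contra hec'
    have hfc' : f = c' := by
      by_contra hfc'
      have h1 : δ q' c' = δ p c' := (herest c' (fun h => hec' h.symm)).1
      have h2 : δ p c' = δ q c' := (hcrest c' (fun h => hAc h.symm)).1
      have h3 : δ q' c' = δ p' c' := (hfrest c' (fun h => hfc' h.symm)).1
      exact hc'ne (h3.symm.trans (h1.trans h2))
    have hpc : δ p c = δ p' c := by
      have h1 : δ q' c = δ p c := (herest c (Ne.symm hBe)).1
      have h2 : δ q' c = δ p' c := (hfrest c (by rw [hfc']; exact hAc)).1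
      exact h1.symm.trans h2
    have h1 : δ p c' ≠ δ p' c' := by
      have h2 : δ p c' = δ q c' := (hcrest c' (fun h => hAc h.symm)).1
      intro h3
      exact hc'ne (h3.symm.trans h2)
    refine hp'.2 (euler_eq_zero_of w hw (δ p) (δ p') c' h1 (fun i hi => ?_))
    by_cases hic : i = c
    · subst hic
      refine ⟨hpc, ?_⟩
      have := (herest i (Ne.symm hBe)).2
      rwa [(herest i (Ne.symm hBe)).1] at this
    · exact ⟨((hcrest i hic).1).trans ((hc'rest i hi).1).symm, (hcrest i hic).2⟩
  subst hCe
  -- Step D : f = c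
  have hDf : f = c := by
    by_contra hfc
    have h1 : δ q' c = δ p c := (herest c hAc).1
    have h2 : δ p' c = δ q c := (hc'rest c hAc).1
    have h3 : δ q' c = δ p' c := (hfrest c (fun h => hfc h.symm)).1
    exact hcne (h1.symm.trans (h3.trans h2))
  subst hDf
  -- Step E : δ q' e = δ p' e
  have hE : δ q' e = δ p' e := (hfrest e (Ne.symm hAc)).1
  -- final contradiction via linear independence
  have hsum : delta w (δ p) + delta w (δ p') = delta w (δ q) + delta w (δ q') := by
    apply delta_add_delta
    intro i
    by_cases hif : i = f
    · subst hif
      exact Or.inr ⟨((herest i hAc).1).symm, (hc'rest i hAc).1⟩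
    · by_cases hie : i = e
      · subst hie
        exact Or.inl ⟨(hcrest i (fun h => hif h)).1, hE.symm⟩
      · refine Or.inl ⟨(hcrest i hif).1, ?_⟩
        exact ((hc'rest i hie).1).trans (((herest i hie).1).trans (hcrest i hif).1).symm
  exact li_contra _ hli p p' q q' hp'.1 hne_pq hne_pq' hne_p'q hne_p'q' hq'.1 hsum
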